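/- arXiv:2208.07132 — 4 statements merged into one kernel-verified Lean document; each statement's English description precedes it below -/
import Mathlib

section
/- Let b | λ² ~ Normal(0, q²λ²) and λ² ~ BetaPrime(a_π, a₂) with q, a_π, a₂ > 0. Then the marginal density of b is p(b) = (2πq²)^{−1/2} B(a_π,a₂)^{−1} Γ(a₂+1/2) U(a₂+1/2, 3/2−a_π, b²/(2q²)), where U is the confluent hypergeometric function of the second kind. -/
open MeasureTheory Real Set

/-- The Beta function. -/
noncomputable def betaFn (a b : ℝ) : ℝ := Gamma a * Gamma b / Gamma (a + b)

/-- The Beta-prime density with parameters `a, b`. -/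
noncomputable def betaPrimePDF (a b t : ℝ) : ℝ :=
  t ^ (a - 1) * (1 + t) ^ (-a - b) / betaFn a b

/-- The confluent hypergeometric function of the second kind, via its integral
representation `U(η,ν,z) = Γ(η)⁻¹ ∫₀^∞ e^{−zt} t^{η−1}(1+t)^{ν−η−1} dt`. -/
noncomputable def hypU (η ν z : ℝ) : ℝ :=
  (Gamma η)⁻¹ * ∫ t in Ioi (0:ℝ), exp (-z * t) * t ^ (η - 1) * (1 + t) ^ (ν - η - 1)

/-- For b | λ² ~ Normal(0, q²λ²) and λ² ~ BetaPrime(a_π, a₂), the marginal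
density of b equals (2πq²)^{−1/2} B(a_π,a₂)^{−1} Γ(a₂+1/2) U(a₂+1/2, 3/2−a_π, b²/(2q²)). -/
theorem r2d2_marginal_density (q aπ a₂ b : ℝ) (hq : 0 < q) (haπ : 0 < aπ)
    (ha₂ : 0 < a₂) (hb : b ≠ 0) :
    (∫ l in Ioi (0:ℝ),
        (Real.sqrt (2 * π * q ^ 2 * l))⁻¹ * exp (-(b ^ 2) / (2 * q ^ 2 * l)) *
          betaPrimePDF aπ a₂ l)
      = (Real.sqrt (2 * π * q ^ 2))⁻¹ * (betaFn aπ a₂)⁻¹ * Gamma (a₂ + 1/2) *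
          hypU (a₂ + 1/2) (3/2 - aπ) (b ^ 2 / (2 * q ^ 2)) := by
  have hz : (0:ℝ) < b ^ 2 / (2 * q ^ 2) := by positivity
  set z : ℝ := b ^ 2 / (2 * q ^ 2) with hzdef
  set g : ℝ → ℝ := fun t =>
    exp (-z * t) * t ^ (a₂ + 1/2 - 1) * (1 + t) ^ (3/2 - aπ - (a₂ + 1/2) - 1) with hg
  have key := integral_comp_rpow_Ioi g (p := (-1:ℝ)) (by norm_num)
  set C : ℝ := (Real.sqrt (2 * π * q ^ 2))⁻¹ * (betaFn aπ a₂)⁻¹ with hC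
  have hL : ∀ l ∈ Ioi (0:ℝ),
      (Real.sqrt (2 * π * q ^ 2 * l))⁻¹ * exp (-(b ^ 2) / (2 * q ^ 2 * l)) *
          betaPrimePDF aπ a₂ l
      = C • ((|(-1:ℝ)| * l ^ ((-1:ℝ) - 1)) • g (l ^ (-1:ℝ))) := by
    intro l hl
    have hl0 : (0:ℝ) < l := hl
    have h1l : (0:ℝ) < 1 + l := by linarith
    have hexp : -(b ^ 2) / (2 * q ^ 2 * l) = -z * l⁻¹ := by
      rw [hzdef]; field_simp
    have hsq : Real.sqrt (2 * π * q ^ 2 * l) = Real.sqrt (2 * π * q ^ 2) * l ^ ((1:ℝ)/2) := by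
      rw [Real.sqrt_mul (by positivity), Real.sqrt_eq_rpow l]
    have hinv1l : (1:ℝ) + l⁻¹ = (1 + l) * l⁻¹ := by field_simp; ring
    have e1 : (3:ℝ)/2 - aπ - (a₂ + 1/2) - 1 = -aπ - a₂ := by ring
    simp only [smul_eq_mul, abs_neg, abs_one, Real.rpow_neg_one, hg, betaPrimePDF]
    rw [hexp, hsq, hinv1l, Real.mul_rpow h1l.le (by positivity),
      Real.inv_rpow hl0.le, Real.inv_rpow hl0.le,
      ← Real.rpow_neg hl0.le, ← Real.rpow_neg hl0.le,
      mul_inv, ← Real.rpow_neg hl0.le, e1, div_eq_mul_inv]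
    have hmerge : ∀ x y : ℝ, l ^ x * l ^ y = l ^ (x + y) := fun x y =>
      (Real.rpow_add hl0 x y).symm
    calc (Real.sqrt (2 * π * q ^ 2))⁻¹ * l ^ (-((1:ℝ)/2)) * exp (-z * l⁻¹) *
          (l ^ (aπ - 1) * (1 + l) ^ (-aπ - a₂) * (betaFn aπ a₂)⁻¹)
        = C * (exp (-z * l⁻¹) * (1 + l) ^ (-aπ - a₂)) *
            (l ^ (-((1:ℝ)/2)) * l ^ (aπ - 1)) := by rw [hC]; ring
      _ = C * (exp (-z * l⁻¹) * (1 + l) ^ (-aπ - a₂)) * l ^ (aπ - 3/2 : ℝ) := by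
          rw [hmerge, show (-((1:ℝ)/2) + (aπ - 1)) = aπ - 3/2 from by ring]
      _ = C * (exp (-z * l⁻¹) * (1 + l) ^ (-aπ - a₂)) *
            (l ^ (-(a₂ + 1/2 - 1)) * (l ^ (-(-aπ - a₂)) * l ^ ((-1:ℝ) - 1))) := by
          rw [hmerge, hmerge,
            show (-(a₂ + 1/2 - 1) + (-(-aπ - a₂) + ((-1:ℝ) - 1))) = aπ - 3/2 from by ring]
      _ = _ := by ring
  rw [setIntegral_congr_fun measurableSet_Ioi hL, integral_smul, key, hypU, smul_eq_mul, hC,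
    mul_assoc ((Real.sqrt (2 * π * q ^ 2))⁻¹ * (betaFn aπ a₂)⁻¹),
    ← mul_assoc (Gamma (a₂ + 1/2)), mul_inv_cancel₀ (Real.Gamma_pos_of_pos (by positivity : (0:ℝ) < a₂ + 1/2)).ne', one_mul]
end

section
/- With the marginal prior p(b) from the normal–Beta-prime scale mixture (parameters a_π, a₂ > 0, scale q² > 0), as |b| → ∞ one has p(b) = O(|b|^{−(2a₂+1)}). Consequently, when 0 < a₂ < 1/2, p(b)·b² → ∞ as |b| → ∞, i.e., the tails are heavier than those of the Cauchy distribution. -/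
open MeasureTheory Real Set Filter Asymptotics

/-- The marginal prior density of a coefficient `b` under the normal–Beta-prime scale
mixture: b | λ² ~ Normal(0, q²λ²), λ² ~ BetaPrime(a_π, a₂). -/
noncomputable def r2d2MarginalPDF (q aπ a₂ b : ℝ) : ℝ :=
  ∫ l in Ioi (0:ℝ),
    (Real.sqrt (2 * π * q ^ 2 * l))⁻¹ * exp (-(b ^ 2) / (2 * q ^ 2 * l)) *
      betaPrimePDF aπ a₂ l

open intervalIntegral

set_option maxHeartbeats 1000000 in
lemma exp_neg_le_rpow {s x : ℝ} (hs : 0 < s) (hx : 0 < x) :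
    Real.exp (-x) ≤ s ^ s * x ^ (-s) := by
  rw [Real.rpow_def_of_pos hs, Real.rpow_def_of_pos hx, ← Real.exp_add]
  apply Real.exp_le_exp.2
  have h := Real.log_le_sub_one_of_pos (div_pos hx hs)
  rw [Real.log_div (ne_of_gt hx) (ne_of_gt hs), div_sub_one (ne_of_gt hs),
    le_div_iff₀ hs] at h
  nlinarith

lemma abs_sq_rpow (b r : ℝ) : ((b^2 : ℝ)) ^ r = |b| ^ (2*r) := by
  rw [← sq_abs, ← Real.rpow_natCast |b| 2, ← Real.rpow_mul (abs_nonneg b)]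
  norm_num

set_option maxHeartbeats 1000000 in
lemma r2d2_bounds (q aπ a₂ : ℝ) (hq : 0 < q) (haπ : 0 < aπ) (ha₂ : 0 < a₂) :
    ∃ C > (0:ℝ), ∃ c > (0:ℝ), ∀ b : ℝ, 1 ≤ |b| →
      c * |b| ^ (-(2 * a₂ + 1)) ≤ r2d2MarginalPDF q aπ a₂ b ∧
      r2d2MarginalPDF q aπ a₂ b ≤ C * |b| ^ (-(2 * a₂ + 1)) := by
  have hB : (0:ℝ) < betaFn aπ a₂ := by
    unfold betaFn
    have h1 := Real.Gamma_pos_of_pos haπ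
    have h2 := Real.Gamma_pos_of_pos ha₂
    have h3 := Real.Gamma_pos_of_pos (add_pos haπ ha₂)
    positivity
  have hsq : (0:ℝ) < Real.sqrt (2*π*q^2) := Real.sqrt_pos.2 (by positivity)
  set A : ℝ := (Real.sqrt (2*π*q^2))⁻¹ / betaFn aπ a₂ with hA_def
  have hA : 0 < A := by positivity
  set g : ℝ → ℝ → ℝ := fun b l =>
    l ^ (-(1/2) : ℝ) * Real.exp (-(b^2/(2*q^2*l))) * (l ^ (aπ-1) * (1+l) ^ (-aπ-a₂))
    with hg_def
  have heq : ∀ b : ℝ, r2d2MarginalPDF q aπ a₂ b = A * ∫ l in Ioi (0:ℝ), g b l := by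
    intro b
    unfold r2d2MarginalPDF
    rw [← MeasureTheory.integral_const_mul]
    apply setIntegral_congr_fun measurableSet_Ioi
    intro l hl
    have hl0 : (0:ℝ) < l := hl
    have h2q : (0:ℝ) ≤ 2*π*q^2 := by positivity
    simp only [betaPrimePDF, hg_def, hA_def]
    rw [Real.sqrt_mul h2q l, Real.sqrt_eq_rpow l, mul_inv, ← Real.rpow_neg hl0.le,
      neg_div]
    ring
  -- continuity
  have hgc : ∀ b : ℝ, ContinuousOn (g b) (Ioi (0:ℝ)) := by
    intro b
    apply ContinuousOn.mul
    · apply ContinuousOn.mul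
      · exact continuousOn_id.rpow_const fun l hl => Or.inl (ne_of_gt hl)
      · apply Real.continuous_exp.comp_continuousOn
        apply ContinuousOn.neg
        apply continuousOn_const.div
        · exact (continuous_const.mul continuous_id).continuousOn
        · intro l hl
          have hl0 : (0:ℝ) < l := hl
          positivity
    · apply ContinuousOn.mul
      · exact continuousOn_id.rpow_const fun l hl => Or.inl (ne_of_gt hl)
      · exact (continuousOn_const.add continuousOn_id).rpow_const
          fun l hl => Or.inl (by have h0 : (0:ℝ) < l := hl; show (1:ℝ) + l ≠ 0; intro h; linarith)
  -- exp bound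
  have hexp : ∀ s : ℝ, 0 < s → ∀ b : ℝ, b ≠ 0 → ∀ l : ℝ, 0 < l →
      Real.exp (-(b^2/(2*q^2*l))) ≤ s^s * (2*q^2)^s * (|b| ^ (-(2*s)) * l ^ s) := by
    intro s hs b hb l hl
    have hb2 : (0:ℝ) < b^2 := by positivity
    have h1 : Real.exp (-(b^2/(2*q^2*l))) ≤ s^s * (b^2/(2*q^2*l)) ^ (-s) :=
      exp_neg_le_rpow hs (by positivity)
    have h2 : (b^2/(2*q^2*l)) ^ (-s) = (2*q^2)^s * (|b| ^ (-(2*s)) * l ^ s) := by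
      rw [div_eq_mul_inv, Real.mul_rpow (by positivity) (by positivity),
        Real.inv_rpow (by positivity), ← Real.rpow_neg (by positivity), neg_neg,
        abs_sq_rpow, Real.mul_rpow (by positivity) hl.le,
        show (2:ℝ) * -s = -(2*s) by ring]
      ring
    rw [h2] at h1
    calc Real.exp (-(b^2/(2*q^2*l))) ≤ s^s * ((2*q^2)^s * (|b| ^ (-(2*s)) * l ^ s)) := h1
    _ = s^s * (2*q^2)^s * (|b| ^ (-(2*s)) * l ^ s) := by ring
  -- constants
  set J₁ : ℝ := ∫ l in Ioc (0:ℝ) 1, l ^ (aπ+a₂-1) with hJ₁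
  have hJ₁nn : 0 ≤ J₁ := setIntegral_nonneg measurableSet_Ioc
    (fun l hl => Real.rpow_nonneg (le_of_lt hl.1) _)
  set K₁ : ℝ := (a₂+1/2)^(a₂+1/2) * (2*q^2)^(a₂+1/2) with hK₁
  set K₂ : ℝ := (a₂+1)^(a₂+1) * (2*q^2)^(a₂+1) with hK₂
  have hK₁p : 0 < K₁ := mul_pos (Real.rpow_pos_of_pos (by linarith) _)
    (Real.rpow_pos_of_pos (by positivity) _)
  have hK₂p : 0 < K₂ := mul_pos (Real.rpow_pos_of_pos (by linarith) _)
    (Real.rpow_pos_of_pos (by positivity) _)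
  have hhalf : (0:ℝ) < 1/(a₂+1/2) := one_div_pos.2 (by linarith)
  have hCpos : 0 < A * (K₁*J₁ + 2*K₂ + 1/(a₂+1/2)) := by
    apply mul_pos hA
    nlinarith [mul_nonneg hK₁p.le hJ₁nn]
  have h2pow1 : (0:ℝ) < (2:ℝ)^(-aπ-a₂) := Real.rpow_pos_of_pos (by norm_num) _
  have h2pow2 : (0:ℝ) < (2:ℝ)^(-(3/2)-a₂ : ℝ) := Real.rpow_pos_of_pos (by norm_num) _
  have hcpos : 0 < A * (Real.exp (-(1/(2*q^2))) * ((2:ℝ)^(-aπ-a₂) * (2:ℝ)^(-(3/2)-a₂ : ℝ))) := by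
    apply mul_pos hA
    exact mul_pos (Real.exp_pos _) (mul_pos h2pow1 h2pow2)
  refine ⟨A * (K₁*J₁ + 2*K₂ + 1/(a₂+1/2)), hCpos,
    A * (Real.exp (-(1/(2*q^2))) * ((2:ℝ)^(-aπ-a₂) * (2:ℝ)^(-(3/2)-a₂ : ℝ))), hcpos, ?_⟩
  intro b hb
  have hb0 : (0:ℝ) < |b| := lt_of_lt_of_le one_pos hb
  have hbne : b ≠ 0 := abs_pos.mp hb0
  have hT : (0:ℝ) < b^2 := by positivity
  have hT1 : (1:ℝ) ≤ b^2 := by nlinarith [sq_abs b]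
  have hgm : ∀ s : Set ℝ, MeasurableSet s → s ⊆ Ioi (0:ℝ) →
      AEStronglyMeasurable (g b) (volume.restrict s) :=
    fun s hs hsub => ((hgc b).mono hsub).aestronglyMeasurable hs
  have hgnn : ∀ l : ℝ, 0 < l → 0 ≤ g b l := by
    intro l hl
    simp only [hg_def]
    exact mul_nonneg (mul_nonneg (Real.rpow_nonneg hl.le _) (Real.exp_pos _).le)
      (mul_nonneg (Real.rpow_nonneg hl.le _) (Real.rpow_nonneg (by linarith) _))
  -- pointwise bounds
  have hp1 : ∀ l ∈ Ioc (0:ℝ) 1, g b l ≤ (K₁ * |b| ^ (-(2*a₂+1))) * l ^ (aπ+a₂-1) := by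
    intro l hl
    obtain ⟨hl0, hl1⟩ := hl
    have he := hexp (a₂+1/2) (by linarith) b hbne l hl0
    rw [show -(2*(a₂+1/2)) = -(2*a₂+1) by ring] at he
    have e2 : (1+l) ^ (-aπ-a₂) ≤ 1 :=
      Real.rpow_le_one_of_one_le_of_nonpos (by linarith) (by linarith)
    have hmerge : l ^ (-(1/2):ℝ) * l ^ (a₂+1/2) * l ^ (aπ-1) = l ^ (aπ+a₂-1) := by
      rw [← Real.rpow_add hl0, ← Real.rpow_add hl0]; congr 1; ring
    calc g b l ≤ l ^ (-(1/2):ℝ) *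
        ((a₂+1/2)^(a₂+1/2) * (2*q^2)^(a₂+1/2) * (|b| ^ (-(2*a₂+1)) * l ^ (a₂+1/2))) *
        (l ^ (aπ-1) * 1) := by
          apply mul_le_mul
          · exact mul_le_mul le_rfl he (Real.exp_pos _).le (Real.rpow_nonneg hl0.le _)
          · exact mul_le_mul le_rfl e2 (Real.rpow_nonneg (by linarith) _)
              (Real.rpow_nonneg hl0.le _)
          · exact mul_nonneg (Real.rpow_nonneg hl0.le _) (Real.rpow_nonneg (by linarith) _)
          · exact mul_nonneg (Real.rpow_nonneg hl0.le _)
              (mul_nonneg (mul_nonneg (Real.rpow_nonneg (by linarith) _)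
                (Real.rpow_nonneg (by positivity) _))
                (mul_nonneg (Real.rpow_nonneg (abs_nonneg b) _) (Real.rpow_nonneg hl0.le _)))
      _ = (K₁ * |b| ^ (-(2*a₂+1))) * (l ^ (-(1/2):ℝ) * l ^ (a₂+1/2) * l ^ (aπ-1)) := by
          rw [hK₁]; ring
      _ = (K₁ * |b| ^ (-(2*a₂+1))) * l ^ (aπ+a₂-1) := by rw [hmerge]
  have hp2 : ∀ l ∈ Ioc (1:ℝ) (b^2), g b l ≤ (K₂ * |b| ^ (-(2*a₂+2))) * l ^ (-(1/2):ℝ) := by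
    intro l hl
    obtain ⟨hl1, hlT⟩ := hl
    have hl0 : (0:ℝ) < l := lt_trans one_pos hl1
    have he := hexp (a₂+1) (by linarith) b hbne l hl0
    rw [show -(2*(a₂+1)) = -(2*a₂+2) by ring] at he
    have e2 : (1+l) ^ (-aπ-a₂) ≤ l ^ (-aπ-a₂) :=
      Real.rpow_le_rpow_of_nonpos hl0 (by linarith) (by linarith)
    have hmerge : l ^ (-(1/2):ℝ) * l ^ (a₂+1) * (l ^ (aπ-1) * l ^ (-aπ-a₂)) =
        l ^ (-(1/2):ℝ) := by
      rw [← Real.rpow_add hl0, ← Real.rpow_add hl0, ← Real.rpow_add hl0]; congr 1; ring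
    calc g b l ≤ l ^ (-(1/2):ℝ) *
        ((a₂+1)^(a₂+1) * (2*q^2)^(a₂+1) * (|b| ^ (-(2*a₂+2)) * l ^ (a₂+1))) *
        (l ^ (aπ-1) * l ^ (-aπ-a₂)) := by
          apply mul_le_mul
          · exact mul_le_mul le_rfl he (Real.exp_pos _).le (Real.rpow_nonneg hl0.le _)
          · exact mul_le_mul le_rfl e2 (Real.rpow_nonneg (by linarith) _)
              (Real.rpow_nonneg hl0.le _)
          · exact mul_nonneg (Real.rpow_nonneg hl0.le _) (Real.rpow_nonneg (by linarith) _)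
          · exact mul_nonneg (Real.rpow_nonneg hl0.le _)
              (mul_nonneg (mul_nonneg (Real.rpow_nonneg (by linarith) _)
                (Real.rpow_nonneg (by positivity) _))
                (mul_nonneg (Real.rpow_nonneg (abs_nonneg b) _) (Real.rpow_nonneg hl0.le _)))
      _ = (K₂ * |b| ^ (-(2*a₂+2))) *
          (l ^ (-(1/2):ℝ) * l ^ (a₂+1) * (l ^ (aπ-1) * l ^ (-aπ-a₂))) := by
          rw [hK₂]; ring
      _ = (K₂ * |b| ^ (-(2*a₂+2))) * l ^ (-(1/2):ℝ) := by rw [hmerge]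
  have hp3 : ∀ l ∈ Ioi (b^2), g b l ≤ l ^ (-(3/2)-a₂) := by
    intro l hl
    have hl0 : (0:ℝ) < l := lt_trans hT hl
    have he : Real.exp (-(b^2/(2*q^2*l))) ≤ 1 := by
      rw [Real.exp_le_one_iff]
      have : (0:ℝ) ≤ b^2/(2*q^2*l) := by positivity
      linarith
    have e2 : (1+l) ^ (-aπ-a₂) ≤ l ^ (-aπ-a₂) :=
      Real.rpow_le_rpow_of_nonpos hl0 (by linarith) (by linarith)
    have hmerge : l ^ (-(1/2):ℝ) * (l ^ (aπ-1) * l ^ (-aπ-a₂)) = l ^ (-(3/2)-a₂) := by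
      rw [← Real.rpow_add hl0, ← Real.rpow_add hl0]; congr 1; ring
    calc g b l ≤ l ^ (-(1/2):ℝ) * 1 * (l ^ (aπ-1) * l ^ (-aπ-a₂)) := by
          apply mul_le_mul
          · exact mul_le_mul le_rfl he (Real.exp_pos _).le (Real.rpow_nonneg hl0.le _)
          · exact mul_le_mul le_rfl e2 (Real.rpow_nonneg (by linarith) _)
              (Real.rpow_nonneg hl0.le _)
          · exact mul_nonneg (Real.rpow_nonneg hl0.le _) (Real.rpow_nonneg (by linarith) _)
          · exact mul_nonneg (Real.rpow_nonneg hl0.le _) zero_le_one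
      _ = l ^ (-(3/2)-a₂) := by rw [mul_one]; exact hmerge
  -- integrability of majorants
  have hi1 : IntegrableOn (fun l : ℝ => (K₁ * |b| ^ (-(2*a₂+1))) * l ^ (aπ+a₂-1))
      (Ioc (0:ℝ) 1) :=
    ((intervalIntegrable_iff_integrableOn_Ioc_of_le zero_le_one).mp
      (intervalIntegrable_rpow' (by linarith))).const_mul _
  have hi2 : IntegrableOn (fun l : ℝ => (K₂ * |b| ^ (-(2*a₂+2))) * l ^ (-(1/2):ℝ))
      (Ioc (1:ℝ) (b^2)) :=
    ((intervalIntegrable_iff_integrableOn_Ioc_of_le hT1).mp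
      (intervalIntegrable_rpow' (by norm_num))).const_mul _
  have hi3 : IntegrableOn (fun l : ℝ => l ^ (-(3/2)-a₂)) (Ioi (b^2)) :=
    integrableOn_Ioi_rpow_of_lt (by linarith) hT
  -- integrability of g b
  have hgi1 : IntegrableOn (g b) (Ioc (0:ℝ) 1) := by
    apply Integrable.mono' hi1 (hgm _ measurableSet_Ioc (fun x hx => hx.1))
    filter_upwards [ae_restrict_mem measurableSet_Ioc] with l hl
    rw [Real.norm_eq_abs, abs_of_nonneg (hgnn l hl.1)]
    exact hp1 l hl
  have hgi2 : IntegrableOn (g b) (Ioc (1:ℝ) (b^2)) := by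
    apply Integrable.mono' hi2 (hgm _ measurableSet_Ioc (fun x hx => lt_trans one_pos hx.1))
    filter_upwards [ae_restrict_mem measurableSet_Ioc] with l hl
    rw [Real.norm_eq_abs, abs_of_nonneg (hgnn l (lt_trans one_pos hl.1))]
    exact hp2 l hl
  have hgi3 : IntegrableOn (g b) (Ioi (b^2)) := by
    apply Integrable.mono' hi3 (hgm _ measurableSet_Ioi (fun x hx => lt_trans hT hx))
    filter_upwards [ae_restrict_mem measurableSet_Ioi] with l hl
    rw [Real.norm_eq_abs, abs_of_nonneg (hgnn l (lt_trans hT hl))]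
    exact hp3 l hl
  have hu2 : Ioc (1:ℝ) (b^2) ∪ Ioi (b^2) = Ioi 1 := Ioc_union_Ioi_eq_Ioi hT1
  have hu1 : Ioc (0:ℝ) 1 ∪ Ioi 1 = Ioi 0 := Ioc_union_Ioi_eq_Ioi zero_le_one
  have hd2 : Disjoint (Ioc (1:ℝ) (b^2)) (Ioi (b^2)) := by
    rw [Set.disjoint_left]
    intro x hx hx'
    exact absurd (mem_Ioi.mp hx') (not_lt.2 hx.2)
  have hd1 : Disjoint (Ioc (0:ℝ) 1) (Ioi (1:ℝ)) := by
    rw [Set.disjoint_left]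
    intro x hx hx'
    exact absurd (mem_Ioi.mp hx') (not_lt.2 hx.2)
  have hgi4 : IntegrableOn (g b) (Ioi (1:ℝ)) := by
    rw [← hu2]; exact hgi2.union hgi3
  have hgi : IntegrableOn (g b) (Ioi (0:ℝ)) := by
    rw [← hu1]; exact hgi1.union hgi4
  have hsplit : (∫ l in Ioi (0:ℝ), g b l) =
      (∫ l in Ioc (0:ℝ) 1, g b l) +
        ((∫ l in Ioc (1:ℝ) (b^2), g b l) + ∫ l in Ioi (b^2), g b l) := by
    rw [← hu1, setIntegral_union hd1 measurableSet_Ioi hgi1 hgi4, ← hu2,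
      setIntegral_union hd2 measurableSet_Ioi hgi2 hgi3]
  -- integral estimates
  have hI1 : (∫ l in Ioc (0:ℝ) 1, g b l) ≤ (K₁ * |b| ^ (-(2*a₂+1))) * J₁ := by
    rw [hJ₁, ← MeasureTheory.integral_const_mul]
    exact setIntegral_mono_on hgi1 hi1 measurableSet_Ioc hp1
  have hI2 : (∫ l in Ioc (1:ℝ) (b^2), g b l) ≤ (K₂ * |b| ^ (-(2*a₂+2))) * (2*|b|) := by
    have h1 : (∫ l in Ioc (1:ℝ) (b^2), g b l) ≤
        (K₂ * |b| ^ (-(2*a₂+2))) * ∫ l in Ioc (1:ℝ) (b^2), l ^ (-(1/2):ℝ) := by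
      rw [← MeasureTheory.integral_const_mul]
      exact setIntegral_mono_on hgi2 hi2 measurableSet_Ioc hp2
    have h2 : (∫ l in Ioc (1:ℝ) (b^2), (l:ℝ) ^ (-(1/2):ℝ)) ≤ 2*|b| := by
      rw [← intervalIntegral.integral_of_le hT1, integral_rpow (Or.inl (by norm_num))]
      have hh : ((b^2:ℝ)) ^ (-(1/2)+1 : ℝ) = |b| := by
        rw [abs_sq_rpow]; norm_num
      rw [hh, Real.one_rpow]
      norm_num
      linarith
    exact le_trans h1 (mul_le_mul_of_nonneg_left h2
      (mul_nonneg hK₂p.le (Real.rpow_nonneg (abs_nonneg b) _)))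
  have hI3 : (∫ l in Ioi (b^2), g b l) ≤ |b| ^ (-(2*a₂+1)) / (a₂+1/2) := by
    have h1 : (∫ l in Ioi (b^2), g b l) ≤ ∫ l in Ioi (b^2), (l:ℝ) ^ (-(3/2)-a₂) :=
      setIntegral_mono_on hgi3 hi3 measurableSet_Ioi hp3
    have h2 : (∫ l in Ioi (b^2), (l:ℝ) ^ (-(3/2)-a₂)) = |b| ^ (-(2*a₂+1)) / (a₂+1/2) := by
      rw [integral_Ioi_rpow_of_lt (by linarith) hT,
        show -(3/2)-a₂+1 = -(a₂+1/2) by ring, div_neg, neg_div, neg_neg, abs_sq_rpow,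
        show 2*(-(a₂+1/2)) = -(2*a₂+1) by ring]
    linarith
  have hup : r2d2MarginalPDF q aπ a₂ b ≤
      A * (K₁*J₁ + 2*K₂ + 1/(a₂+1/2)) * |b| ^ (-(2*a₂+1)) := by
    rw [heq b, hsplit]
    have hK2merge : (K₂ * |b| ^ (-(2*a₂+2))) * (2*|b|) = 2*K₂ * |b| ^ (-(2*a₂+1)) := by
      rw [show (-(2*a₂+1) : ℝ) = -(2*a₂+2)+1 by ring, Real.rpow_add hb0, Real.rpow_one]
      ring
    have step := mul_le_mul_of_nonneg_left
      (add_le_add hI1 (add_le_add hI2 hI3)) hA.le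
    apply le_trans step
    apply le_of_eq
    rw [hK2merge]
    ring
  -- lower bound
  have h2T : (0:ℝ) < 2*b^2 := by positivity
  set m : ℝ := Real.exp (-(1/(2*q^2))) * (2:ℝ)^(-aπ-a₂) *
    ((2*b^2) ^ (-(1/2):ℝ) * (2*b^2) ^ (-1-a₂)) with hm_def
  have hmT : ∀ l ∈ Ioc (b^2) (2*b^2), m ≤ g b l := by
    intro l hl
    obtain ⟨hlT, hl2T⟩ := hl
    have hl0 : (0:ℝ) < l := lt_trans hT hlT
    have hl1 : (1:ℝ) ≤ l := le_trans hT1 hlT.le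
    have f1 : (2*b^2 : ℝ) ^ (-(1/2):ℝ) ≤ l ^ (-(1/2):ℝ) :=
      Real.rpow_le_rpow_of_nonpos hl0 hl2T (by norm_num)
    have f2 : Real.exp (-(1/(2*q^2))) ≤ Real.exp (-(b^2/(2*q^2*l))) := by
      apply Real.exp_le_exp.2
      have hq2 : (0:ℝ) < q^2 := by positivity
      have hdiv : b^2/(2*q^2*l) ≤ 1/(2*q^2) := by
        rw [div_le_div_iff₀ (by positivity) (by positivity)]
        nlinarith [hlT.le]
      linarith
    have hmerge : l ^ (aπ-1) * l ^ (-aπ-a₂) = l ^ (-1-a₂) := by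
      rw [← Real.rpow_add hl0]; congr 1; ring
    have stepa : (2*l : ℝ) ^ (-aπ-a₂) ≤ (1+l) ^ (-aπ-a₂) :=
      Real.rpow_le_rpow_of_nonpos (by linarith) (by linarith) (by linarith)
    have f3 : (2:ℝ)^(-aπ-a₂) * (2*b^2) ^ (-1-a₂) ≤ l ^ (aπ-1) * (1+l) ^ (-aπ-a₂) := by
      calc (2:ℝ)^(-aπ-a₂) * (2*b^2) ^ (-1-a₂)
          ≤ (2:ℝ)^(-aπ-a₂) * l ^ (-1-a₂) := by
            apply mul_le_mul_of_nonneg_left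
              (Real.rpow_le_rpow_of_nonpos hl0 hl2T (by linarith))
              (Real.rpow_nonneg (by norm_num) _)
        _ = (2:ℝ)^(-aπ-a₂) * (l ^ (aπ-1) * l ^ (-aπ-a₂)) := by rw [hmerge]
        _ = l ^ (aπ-1) * ((2*l) ^ (-aπ-a₂)) := by
            rw [Real.mul_rpow (by norm_num) hl0.le]; ring
        _ ≤ l ^ (aπ-1) * (1+l) ^ (-aπ-a₂) :=
            mul_le_mul_of_nonneg_left stepa (Real.rpow_nonneg hl0.le _)
    calc m = (2*b^2 : ℝ) ^ (-(1/2):ℝ) * Real.exp (-(1/(2*q^2))) *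
          ((2:ℝ)^(-aπ-a₂) * (2*b^2) ^ (-1-a₂)) := by rw [hm_def]; ring
      _ ≤ l ^ (-(1/2):ℝ) * Real.exp (-(b^2/(2*q^2*l))) *
          (l ^ (aπ-1) * (1+l) ^ (-aπ-a₂)) := by
          apply mul_le_mul
          · exact mul_le_mul f1 f2 (Real.exp_pos _).le (Real.rpow_nonneg hl0.le _)
          · exact f3
          · exact mul_nonneg (Real.rpow_nonneg (by norm_num) _)
              (Real.rpow_nonneg h2T.le _)
          · exact mul_nonneg (Real.rpow_nonneg hl0.le _) (Real.exp_pos _).le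
      _ = g b l := rfl
  have hlow1 : m * b^2 ≤ ∫ l in Ioc (b^2) (2*b^2), g b l := by
    have hc : (∫ _ in Ioc (b^2) (2*b^2), m) = m * b^2 := by
      rw [setIntegral_const, Real.volume_real_Ioc_of_le (by nlinarith),
        smul_eq_mul]
      ring
    rw [← hc]
    apply setIntegral_mono_on (integrableOn_const measure_Ioc_lt_top.ne)
      (hgi.mono_set (fun x hx => lt_trans hT hx.1)) measurableSet_Ioc hmT
  have hlow2 : (∫ l in Ioc (b^2) (2*b^2), g b l) ≤ ∫ l in Ioi (0:ℝ), g b l := by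
    apply setIntegral_mono_set hgi
    · filter_upwards [ae_restrict_mem measurableSet_Ioi] with l hl
      exact hgnn l hl
    · exact HasSubset.Subset.eventuallyLE (fun x hx => lt_trans hT hx.1)
  have hmb : m * b^2 =
      (Real.exp (-(1/(2*q^2))) * ((2:ℝ)^(-aπ-a₂) * (2:ℝ)^(-(3/2)-a₂ : ℝ))) *
        |b| ^ (-(2*a₂+1)) := by
    have e1 : (2*b^2:ℝ) ^ (-(1/2):ℝ) * (2*b^2) ^ (-1-a₂) = (2*b^2) ^ (-(3/2)-a₂ : ℝ) := by
      rw [← Real.rpow_add h2T]; congr 1; ring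
    have e2 : ((2*b^2:ℝ)) ^ (-(3/2)-a₂ : ℝ) =
        2 ^ (-(3/2)-a₂ : ℝ) * (b^2) ^ (-(3/2)-a₂ : ℝ) :=
      Real.mul_rpow (by norm_num) (by positivity)
    have e3 : ((b^2:ℝ)) ^ (-(3/2)-a₂ : ℝ) * b^2 = |b| ^ (-(2*a₂+1)) := by
      have hb2 : (b^2:ℝ) = |b| ^ ((2:ℕ):ℝ) := by
        rw [Real.rpow_natCast]; exact (sq_abs b).symm
      rw [abs_sq_rpow]
      rw [hb2]
      rw [← Real.rpow_add hb0]
      congr 1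
      push_cast
      ring
    rw [hm_def, e1, e2]
    calc Real.exp (-(1/(2*q^2))) * (2:ℝ)^(-aπ-a₂) *
          (2 ^ (-(3/2)-a₂ : ℝ) * (b^2) ^ (-(3/2)-a₂ : ℝ)) * b^2
        = (Real.exp (-(1/(2*q^2))) * ((2:ℝ)^(-aπ-a₂) * (2:ℝ)^(-(3/2)-a₂ : ℝ))) *
          ((b^2) ^ (-(3/2)-a₂ : ℝ) * b^2) := by ring
      _ = _ := by rw [e3]
  constructor
  · rw [heq b]
    calc A * (Real.exp (-(1/(2*q^2))) * ((2:ℝ)^(-aπ-a₂) * (2:ℝ)^(-(3/2)-a₂ : ℝ))) *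
          |b| ^ (-(2*a₂+1))
        = A * (m * b^2) := by rw [hmb]; ring
      _ ≤ A * ∫ l in Ioi (0:ℝ), g b l := by
          apply mul_le_mul_of_nonneg_left (le_trans hlow1 hlow2) hA.le
  · exact hup

/-- as |b| → ∞, p(b) = O(|b|^{−(2a₂+1)}); and if 0 < a₂ < 1/2 then
p(b)·b² → ∞, i.e. the tails are heavier than those of the Cauchy distribution. -/
theorem r2d2_marginal_tail_behavior (q aπ a₂ : ℝ) (hq : 0 < q) (haπ : 0 < aπ)
    (ha₂ : 0 < a₂) :
    IsBigO (cocompact ℝ) (r2d2MarginalPDF q aπ a₂)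
        (fun b => |b| ^ (-(2 * a₂ + 1))) ∧
    (a₂ < 1/2 →
      Tendsto (fun b => r2d2MarginalPDF q aπ a₂ b * b ^ 2) (cocompact ℝ) atTop) := by
  obtain ⟨C, hC, c, hc, hbd⟩ := r2d2_bounds q aπ a₂ hq haπ ha₂
  have habs : Tendsto (fun b : ℝ => |b|) (cocompact ℝ) atTop := by
    exact tendsto_norm_cocompact_atTop (E := ℝ)
  have hev : ∀ᶠ b : ℝ in cocompact ℝ, 1 ≤ |b| := habs.eventually_ge_atTop 1
  constructor
  · apply IsBigO.of_bound C
    filter_upwards [hev] with b hb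
    have hb0 : (0:ℝ) < |b| := lt_of_lt_of_le one_pos hb
    have hpos : 0 < r2d2MarginalPDF q aπ a₂ b :=
      lt_of_lt_of_le (mul_pos hc (Real.rpow_pos_of_pos hb0 _)) (hbd b hb).1
    rw [Real.norm_eq_abs, Real.norm_eq_abs, abs_of_pos hpos,
      abs_of_pos (Real.rpow_pos_of_pos hb0 _)]
    exact (hbd b hb).2
  · intro ha
    have hlow : Tendsto (fun b : ℝ => c * |b| ^ (1 - 2*a₂)) (cocompact ℝ) atTop :=
      ((tendsto_rpow_atTop (by linarith)).comp habs).const_mul_atTop hc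
    refine tendsto_atTop_mono' _ ?_ hlow
    filter_upwards [hev] with b hb
    have hb0 : (0:ℝ) < |b| := lt_of_lt_of_le one_pos hb
    have h1 := (hbd b hb).1
    have hb2 : (b^2:ℝ) = |b| ^ ((2:ℕ):ℝ) := by
      rw [Real.rpow_natCast]; exact (sq_abs b).symm
    have e : |b| ^ (-(2*a₂+1)) * b^2 = |b| ^ (1-2*a₂) := by
      rw [hb2, ← Real.rpow_add hb0]; congr 1; push_cast; ring
    calc c * |b| ^ (1-2*a₂) = c * |b| ^ (-(2*a₂+1)) * b^2 := by rw [mul_assoc, e]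
      _ ≤ r2d2MarginalPDF q aπ a₂ b * b^2 :=
          mul_le_mul_of_nonneg_right h1 (by positivity)
end

section
/- Define κ = 1/(1 + rφτ²) for fixed constants r > 0, φ > 0, where τ² ~ BetaPrime(a₁, a₂). Then κ has density p(κ) = (rφ)^{a₂}/B(a₁,a₂) · (1−κ)^{a₁−1} κ^{a₂−1} ((rφ−1)κ + 1)^{−a₁−a₂} on (0,1). -/
open MeasureTheory Real Set

lemma lintegral_image_1d {s : Set ℝ} {f f' : ℝ → ℝ} (hs : MeasurableSet s)
    (hf' : ∀ x ∈ s, HasDerivWithinAt f (f' x) s x) (hf : InjOn f s) (g : ℝ → ENNReal) :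
    ∫⁻ x in f '' s, g x = ∫⁻ x in s, ENNReal.ofReal |f' x| * g (f x) := by
  simpa only [ContinuousLinearMap.det_toSpanSingleton] using
    MeasureTheory.lintegral_image_eq_lintegral_abs_det_fderiv_mul volume hs
      (fun x hx => (hf' x hx).hasFDerivWithinAt) hf g

lemma key_density_eq (a₁ a₂ c k : ℝ) (hc : 0 < c) (hk : 0 < k) (hk1 : k < 1) :
    1 / (c * k ^ 2) * betaPrimePDF a₁ a₂ ((1 - k) / (c * k)) =
    c ^ a₂ / betaFn a₁ a₂ * (1 - k) ^ (a₁ - 1) * k ^ (a₂ - 1) *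
      ((c - 1) * k + 1) ^ (-a₁ - a₂) := by
  have hck : 0 < c * k := mul_pos hc hk
  have h1k : (0:ℝ) < 1 - k := by linarith
  have hD : 0 < (c - 1) * k + 1 := by nlinarith
  have h1t : 1 + (1 - k) / (c * k) = ((c - 1) * k + 1) / (c * k) := by
    field_simp; ring
  have main : (c * k) ^ (a₁ + a₂) / (c * k) ^ (a₁ - 1)
      = c ^ a₂ * k ^ (a₂ - 1) * (c * k ^ 2) := by
    rw [← Real.rpow_sub hck, show a₁ + a₂ - (a₁ - 1) = a₂ + 1 by ring,
      Real.rpow_add hck, Real.rpow_one, Real.mul_rpow hc.le hk.le,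
      Real.rpow_sub hk a₂ 1, Real.rpow_one]
    field_simp
  have hP2 : (c * k) ^ (a₁ - 1) ≠ 0 := (Real.rpow_pos_of_pos hck _).ne'
  have hP4 : (c * k) ^ (a₁ + a₂)
      = c ^ a₂ * k ^ (a₂ - 1) * (c * k ^ 2) * (c * k) ^ (a₁ - 1) := by
    rw [← main, div_mul_cancel₀ _ hP2]
  unfold betaPrimePDF
  rw [h1t, Real.div_rpow h1k.le hck.le, Real.div_rpow hD.le hck.le,
    show -a₁ - a₂ = -(a₁ + a₂) by ring, Real.rpow_neg hck.le, hP4]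
  have hckk : (c * k ^ 2) ≠ 0 := by positivity
  rw [show c ^ a₂ / betaFn a₁ a₂ * (1 - k) ^ (a₁ - 1) * k ^ (a₂ - 1) *
        ((c - 1) * k + 1) ^ (-(a₁ + a₂))
      = c ^ a₂ / betaFn a₁ a₂ * (1 - k) ^ (a₁ - 1) * k ^ (a₂ - 1) *
        ((c - 1) * k + 1) ^ (-(a₁ + a₂)) * ((c * k ^ 2)⁻¹ * (c * k ^ 2)) *
        (((c * k) ^ (a₁ - 1))⁻¹ * (c * k) ^ (a₁ - 1)) by
      rw [inv_mul_cancel₀ hckk, inv_mul_cancel₀ hP2, mul_one, mul_one]]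
  simp only [div_eq_mul_inv, mul_inv, inv_inv]
  ring

/-- if κ = 1/(1 + rφτ²) with r, φ > 0 and τ² ~ BetaPrime(a₁, a₂), then κ
has density (rφ)^{a₂}/B(a₁,a₂) · (1−κ)^{a₁−1} κ^{a₂−1} ((rφ−1)κ+1)^{−a₁−a₂} on (0,1). -/
theorem shrinkage_factor_density (Ω : Type*) [MeasurableSpace Ω] (μ : Measure Ω)
    [IsProbabilityMeasure μ] (a₁ a₂ r φ : ℝ) (ha₁ : 0 < a₁) (ha₂ : 0 < a₂)
    (hr : 0 < r) (hφ : 0 < φ) (τ2 : Ω → ℝ) (hτ2 : Measurable τ2)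
    (hlaw : Measure.map τ2 μ = (volume : Measure ℝ).withDensity
      (fun t => ENNReal.ofReal (Set.indicator (Set.Ioi 0) (betaPrimePDF a₁ a₂) t))) :
    Measure.map (fun ω => 1 / (1 + r * φ * τ2 ω)) μ
      = (volume : Measure ℝ).withDensity
          (fun k => ENNReal.ofReal (Set.indicator (Set.Ioo 0 1)
            (fun k => (r * φ) ^ a₂ / betaFn a₁ a₂ * (1 - k) ^ (a₁ - 1) * k ^ (a₂ - 1) *
              ((r * φ - 1) * k + 1) ^ (-a₁ - a₂)) k)) := by
  set c := r * φ with hcdef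
  have hc : 0 < c := mul_pos hr hφ
  set G : ℝ → ℝ := fun t => 1 / (1 + c * t) with hGdef
  set H : ℝ → ℝ := fun k => (1 - k) / (c * k) with hHdef
  have hg : Measurable G := by
    apply Measurable.div measurable_const
    exact measurable_const.add (measurable_id.const_mul c)
  have hmap : Measure.map (fun ω => 1 / (1 + c * τ2 ω)) μ
      = Measure.map G (Measure.map τ2 μ) := (Measure.map_map hg hτ2).symm
  rw [hmap, hlaw]
  ext s hs
  rw [Measure.map_apply hg hs, withDensity_apply _ (hg hs), withDensity_apply _ hs]
  have hind1 : (fun t => ENNReal.ofReal ((Ioi (0:ℝ)).indicator (betaPrimePDF a₁ a₂) t))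
      = (Ioi (0:ℝ)).indicator (fun t => ENNReal.ofReal (betaPrimePDF a₁ a₂ t)) := by
    ext t; by_cases ht : t ∈ Ioi (0:ℝ) <;> simp [ht]
  have hind2 : (fun k => ENNReal.ofReal ((Ioo (0:ℝ) 1).indicator
        (fun k => c ^ a₂ / betaFn a₁ a₂ * (1 - k) ^ (a₁ - 1) * k ^ (a₂ - 1) *
          ((c - 1) * k + 1) ^ (-a₁ - a₂)) k))
      = (Ioo (0:ℝ) 1).indicator (fun k => ENNReal.ofReal
          (c ^ a₂ / betaFn a₁ a₂ * (1 - k) ^ (a₁ - 1) * k ^ (a₂ - 1) *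
          ((c - 1) * k + 1) ^ (-a₁ - a₂))) := by
    ext k; by_cases hk : k ∈ Ioo (0:ℝ) 1 <;> simp [hk]
  rw [hind1, hind2, lintegral_indicator measurableSet_Ioi, lintegral_indicator measurableSet_Ioo,
    Measure.restrict_restrict measurableSet_Ioi, Measure.restrict_restrict measurableSet_Ioo]
  have himg : Ioi (0:ℝ) ∩ G ⁻¹' s = H '' (Ioo (0:ℝ) 1 ∩ s) := by
    ext x
    constructor
    · rintro ⟨hx, hxs⟩
      have hx' : (0:ℝ) < x := hx
      have hpos : (0:ℝ) < 1 + c * x := by nlinarith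
      refine ⟨G x, ⟨⟨?_, ?_⟩, hxs⟩, ?_⟩
      · exact div_pos one_pos hpos
      · rw [div_lt_one hpos]; nlinarith
      · show (1 - 1 / (1 + c * x)) / (c * (1 / (1 + c * x))) = x
        field_simp
        ring
    · rintro ⟨k, ⟨⟨hk0, hk1⟩, hks⟩, rfl⟩
      have hck : 0 < c * k := mul_pos hc hk0
      have h1k : (0:ℝ) < 1 - k := by linarith
      have hHk : 0 < H k := div_pos h1k hck
      refine ⟨hHk, ?_⟩
      have : G (H k) = k := by
        show 1 / (1 + c * ((1 - k) / (c * k))) = k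
        have h : 1 + c * ((1 - k) / (c * k)) = 1 / k := by
          field_simp
          ring
        rw [h, one_div_one_div]
      simpa [this] using hks
  have hmeas : MeasurableSet (Ioo (0:ℝ) 1 ∩ s) := measurableSet_Ioo.inter hs
  have hderiv : ∀ x ∈ Ioo (0:ℝ) 1 ∩ s,
      HasDerivWithinAt H (-(1 / (c * x ^ 2))) (Ioo (0:ℝ) 1 ∩ s) x := by
    rintro x ⟨⟨hx0, hx1⟩, _⟩
    have hcx : c * x ≠ 0 := (mul_pos hc hx0).ne'
    have h1 : HasDerivAt (fun k : ℝ => 1 - k) (-1) x := by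
      simpa using (hasDerivAt_id x).const_sub 1
    have h2 : HasDerivAt (fun k : ℝ => c * k) c x := by
      simpa using (hasDerivAt_id x).const_mul c
    have := (h1.div h2 hcx)
    have heq : (-1 * (c * x) - (1 - x) * c) / (c * x) ^ 2 = -(1 / (c * x ^ 2)) := by
      field_simp
      ring
    rw [heq] at this
    exact this.hasDerivWithinAt
  have hinj : InjOn H (Ioo (0:ℝ) 1 ∩ s) := by
    rintro x ⟨⟨hx0, hx1⟩, _⟩ y ⟨⟨hy0, hy1⟩, _⟩ hxy
    have hcx : 0 < c * x := mul_pos hc hx0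
    have hcy : 0 < c * y := mul_pos hc hy0
    have : (1 - x) * (c * y) = (1 - y) * (c * x) :=
      (div_eq_div_iff hcx.ne' hcy.ne').mp hxy
    nlinarith
  rw [himg, lintegral_image_1d hmeas hderiv hinj]
  refine setLIntegral_congr_fun hmeas ?_
  rintro k ⟨⟨hk0, hk1⟩, _⟩
  have hHk : H k ∈ Ioi (0:ℝ) := div_pos (by linarith) (mul_pos hc hk0)
  have habs : |(-(1 / (c * k ^ 2)))| = 1 / (c * k ^ 2) := by
    rw [abs_neg, abs_of_nonneg]
    positivity
  beta_reduce
  rw [habs, ← ENNReal.ofReal_mul (by positivity)]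
  exact congrArg ENNReal.ofReal (key_density_eq a₁ a₂ c k hc hk0 hk1)
end

section
/- With κ = 1/(1 + rφτ²), τ² ~ BetaPrime(a₁, a₂), the m-th moment is E(κᵐ) = (rφ)^{a₂}/B(a₁,a₂) · B(a₂+m, a₁) · ₂F₁(a₁+a₂, a₂+m; a₁+a₂+m; 1−rφ), for any positive integer m, provided 0 < rφ (so the argument 1−rφ < 1). -/
open MeasureTheory Real Set

/-- The Gauss hypergeometric function ₂F₁, via Euler's integral representation
(valid for γ > β > 0). -/
noncomputable def hyp2F1 (a b c z : ℝ) : ℝ :=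
  Gamma c / (Gamma b * Gamma (c - b)) *
    ∫ u in Ioo (0:ℝ) 1, u ^ (b - 1) * (1 - u) ^ (c - b - 1) * (1 - z * u) ^ (-a)

/-- Pointwise identity behind the change of variables `u = 1/(1+ct)`. -/
lemma shrinkage_key (a₁ a₂ c t : ℝ) (m : ℕ) (hc : 0 < c) (ht : 0 < t) :
    c ^ a₂ * (|(-c / (1+c*t)^2)| * ((1+c*t)⁻¹ ^ (a₂+(m:ℝ)-1) * (1 - (1+c*t)⁻¹) ^ (a₁-1) *
      (1 - (1-c) * (1+c*t)⁻¹) ^ (-(a₁+a₂))))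
    = (1/(1+c*t))^m * (t^(a₁-1) * (1+t)^(-a₁-a₂)) := by
  have hX : (0:ℝ) < 1 + c*t := by positivity
  have h1t : (0:ℝ) < 1 + t := by positivity
  have h1 : 1 - (1+c*t)⁻¹ = c*t/(1+c*t) := by field_simp; ring
  have h2 : 1 - (1-c) * (1+c*t)⁻¹ = c*(1+t)/(1+c*t) := by field_simp; ring
  have habs : |(-c / (1+c*t)^2)| = c / (1+c*t)^2 := by
    rw [abs_div, abs_neg, abs_of_pos hc, abs_of_pos (pow_pos hX 2)]
  rw [h1, h2, habs]
  have hL : (0:ℝ) < c ^ a₂ * (c / (1+c*t)^2 * ((1+c*t)⁻¹ ^ (a₂+(m:ℝ)-1) *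
      (c*t/(1+c*t)) ^ (a₁-1) * (c*(1+t)/(1+c*t)) ^ (-(a₁+a₂)))) := by positivity
  have hR : (0:ℝ) < (1/(1+c*t))^m * (t^(a₁-1) * (1+t)^(-a₁-a₂)) := by positivity
  rw [← Real.exp_log hL, ← Real.exp_log hR]
  congr 1
  rw [Real.log_mul (by positivity) (by positivity), Real.log_mul (by positivity) (by positivity),
    Real.log_mul (by positivity) (by positivity), Real.log_mul (by positivity) (by positivity),
    Real.log_mul (by positivity) (by positivity),
    Real.log_div (by positivity) (by positivity), Real.log_pow, Real.log_pow,
    Real.log_rpow hc, Real.log_rpow (by positivity : (0:ℝ) < (1+c*t)⁻¹),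
    Real.log_rpow (by positivity : (0:ℝ) < c*t/(1+c*t)),
    Real.log_rpow (by positivity : (0:ℝ) < c*(1+t)/(1+c*t)),
    Real.log_div (by positivity) (by positivity), Real.log_div (by positivity) (by positivity),
    Real.log_mul (by positivity) (by positivity), Real.log_mul (by positivity) (by positivity),
    Real.log_inv, Real.log_div (by positivity) (by positivity), Real.log_one,
    Real.log_mul (by positivity) (by positivity), Real.log_rpow ht, Real.log_rpow h1t]
  ring

/-- Change of variables `u = 1/(1+ct)` from `(0,∞)` to `(0,1)`. -/
lemma shrinkage_cov (c : ℝ) (hc : 0 < c) (a₁ a₂ : ℝ) (m : ℕ) :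
    (∫ u in Ioo (0:ℝ) 1, u^(a₂+(m:ℝ)-1) * (1-u)^(a₁-1) * (1-(1-c)*u)^(-(a₁+a₂)))
      = ∫ t in Ioi (0:ℝ), |(-c/(1+c*t)^2)| * ((1+c*t)⁻¹^(a₂+(m:ℝ)-1) * (1-(1+c*t)⁻¹)^(a₁-1)
          * (1-(1-c)*(1+c*t)⁻¹)^(-(a₁+a₂))) := by
  have himg : (fun t => (1+c*t)⁻¹) '' Ioi 0 = Ioo (0:ℝ) 1 := by
    ext u
    constructor
    · rintro ⟨t, ht, rfl⟩
      simp only [mem_Ioi] at ht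
      have hX : (0:ℝ) < 1 + c*t := by positivity
      refine ⟨by positivity, ?_⟩
      rw [inv_lt_one_iff₀]
      right; nlinarith
    · rintro ⟨h0, h1⟩
      refine ⟨(1-u)/(c*u), ?_, ?_⟩
      · simp only [mem_Ioi]
        exact div_pos (by linarith) (by positivity)
      · show (1 + c*((1-u)/(c*u)))⁻¹ = u
        have hu : u ≠ 0 := ne_of_gt h0
        have h : 1 + c*((1-u)/(c*u)) = u⁻¹ := by field_simp; ring
        rw [h, inv_inv]
  have hderiv : ∀ t ∈ Ioi (0:ℝ), HasDerivWithinAt (fun t => (1+c*t)⁻¹) (-c/(1+c*t)^2) (Ioi 0) t := by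
    intro t ht
    simp only [mem_Ioi] at ht
    have hX : (1:ℝ) + c*t ≠ 0 := by positivity
    have h : HasDerivAt (fun t : ℝ => 1 + c*t) c t := by
      simpa using ((hasDerivAt_id t).const_mul c).const_add 1
    exact (h.inv hX).hasDerivWithinAt
  have hinj : InjOn (fun t => (1+c*t)⁻¹) (Ioi (0:ℝ)) := by
    intro x hx y hy h
    simp only [mem_Ioi] at hx hy
    simp only at h
    have := inv_injective h
    have := mul_left_cancel₀ (ne_of_gt hc) (by linarith : c*x = c*y)
    linarith
  have hcv := integral_image_eq_integral_abs_deriv_smul measurableSet_Ioi hderiv hinj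
    (fun u => u^(a₂+(m:ℝ)-1) * (1-u)^(a₁-1) * (1-(1-c)*u)^(-(a₁+a₂)))
  rw [himg] at hcv
  simpa [smul_eq_mul] using hcv

/-- with κ = 1/(1+rφτ²), τ² ~ BetaPrime(a₁,a₂), r, φ > 0 and m a positive
integer, E(κᵐ) = (rφ)^{a₂}/B(a₁,a₂) · B(a₂+m, a₁) · ₂F₁(a₁+a₂, a₂+m; a₁+a₂+m; 1−rφ). -/
theorem shrinkage_factor_moments (a₁ a₂ r φ : ℝ) (m : ℕ) (ha₁ : 0 < a₁)
    (ha₂ : 0 < a₂) (hr : 0 < r) (hφ : 0 < φ) (hm : 0 < m) :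
    (∫ t in Ioi (0:ℝ), (1 / (1 + r * φ * t)) ^ m * betaPrimePDF a₁ a₂ t)
      = (r * φ) ^ a₂ / betaFn a₁ a₂ * betaFn (a₂ + m) a₁ *
          hyp2F1 (a₁ + a₂) (a₂ + m) (a₁ + a₂ + m) (1 - r * φ) := by
  set c := r * φ with hcdef
  have hc : 0 < c := mul_pos hr hφ
  -- the Beta/Gamma prefactor algebra
  have hG1 : 0 < Gamma a₁ := Gamma_pos_of_pos ha₁
  have hG2 : 0 < Gamma (a₂ + (m:ℝ)) := Gamma_pos_of_pos (by positivity)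
  have hGS : 0 < Gamma (a₁ + a₂ + (m:ℝ)) := Gamma_pos_of_pos (by positivity)
  have hBH : betaFn (a₂ + m) a₁ * hyp2F1 (a₁ + a₂) (a₂ + m) (a₁ + a₂ + m) (1 - c)
      = ∫ u in Ioo (0:ℝ) 1, u^(a₂+(m:ℝ)-1) * (1-u)^(a₁-1) * (1-(1-c)*u)^(-(a₁+a₂)) := by
    unfold betaFn hyp2F1
    rw [show a₂ + (m:ℝ) + a₁ = a₁ + a₂ + (m:ℝ) by ring,
      show a₁ + a₂ + (m:ℝ) - (a₂ + (m:ℝ)) = a₁ by ring, ← mul_assoc]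
    have h : Gamma (a₂ + (m:ℝ)) * Gamma a₁ / Gamma (a₁ + a₂ + (m:ℝ)) *
        (Gamma (a₁ + a₂ + (m:ℝ)) / (Gamma (a₂ + (m:ℝ)) * Gamma a₁)) = 1 := by
      field_simp
    rw [h, one_mul]
  -- change of variables
  have key : (∫ t in Ioi (0:ℝ), (1/(1+c*t))^m * (t^(a₁-1)*(1+t)^(-a₁-a₂)))
      = c ^ a₂ * ∫ u in Ioo (0:ℝ) 1, u^(a₂+(m:ℝ)-1) * (1-u)^(a₁-1) * (1-(1-c)*u)^(-(a₁+a₂)) := by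
    rw [shrinkage_cov c hc a₁ a₂ m, ← integral_const_mul]
    symm
    refine setIntegral_congr_fun measurableSet_Ioi (fun t ht => ?_)
    simp only [mem_Ioi] at ht
    exact shrinkage_key a₁ a₂ c t m hc ht
  have hsplit : (∫ t in Ioi (0:ℝ), (1 / (1 + c * t)) ^ m * betaPrimePDF a₁ a₂ t)
      = (∫ t in Ioi (0:ℝ), (1/(1+c*t))^m * (t^(a₁-1)*(1+t)^(-a₁-a₂))) / betaFn a₁ a₂ := by
    rw [← integral_div]
    refine setIntegral_congr_fun measurableSet_Ioi (fun t ht => ?_)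
    simp only [betaPrimePDF]
    ring
  rw [hsplit, key, mul_assoc, hBH]
  ring
end
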